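/- For x in [−1, −a] ∪ [a, 1], the number z = x + i√(1 − x^2) satisfies z^n = 1 if and only if x ∈ {1, −1, a, −a}. -/

import Mathlib

/-- For `x ∈ [-1, -a] ∪ [a, 1]`, the number `z = x + i√(1 - x²)` satisfies
`z^n = 1` iff `x ∈ {1, -1, a, -a}`. -/
theorem stmt_11 (n : ℕ) (hn : 6 ≤ n) (hev : Even n) (a b : ℝ) (ζ : ℂ)
    (ha : 0 < a) (ha1 : a < 1) (hb : 0 < b) (hb1 : b < 1)
    (hab : a ^ 2 + b ^ 2 = 1)
    (hζ : ζ = Complex.mk a b) (hroot : ζ ^ n = 1) (him : 0 < ζ.im)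
    (hmin : ∀ w : ℂ, w ^ n = 1 → 0 < w.im →
      ‖ζ - 1‖ ≤ ‖w - 1‖)
    (x : ℝ) (hx : x ∈ Set.Icc (-1 : ℝ) (-a) ∪ Set.Icc a 1) :
    (Complex.mk x (Real.sqrt (1 - x ^ 2))) ^ n = 1 ↔
      x = 1 ∨ x = -1 ∨ x = a ∨ x = -a := by
  have hn0 : n ≠ 0 := by omega
  -- key: any root of unity with positive imaginary part has real part ≤ a
  have hre_le : ∀ w : ℂ, w ^ n = 1 → 0 < w.im → w.re ≤ a := by
    intro w hw hwim
    have habs : ‖w‖ = 1 := Complex.norm_eq_one_of_pow_eq_one hw hn0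
    have hns : w.re ^ 2 + w.im ^ 2 = 1 := by
      have := Complex.sq_norm w
      rw [habs] at this
      simpa [Complex.normSq_apply, sq, eq_comm] using this
    have hle := hmin w hw hwim
    have hsq : ‖ζ - 1‖ ^ 2 ≤ ‖w - 1‖ ^ 2 :=
      pow_le_pow_left₀ (norm_nonneg _) hle 2
    rw [Complex.sq_norm, Complex.sq_norm] at hsq
    simp only [Complex.normSq_apply, Complex.sub_re, Complex.sub_im,
      Complex.one_re, Complex.one_im, hζ] at hsq
    nlinarith [hsq]
  have hζre : ζ.re = a := by rw [hζ]
  have hζim : ζ.im = b := by rw [hζ]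
  set s := Real.sqrt (1 - x ^ 2) with hs
  constructor
  · intro h
    rcases hx with hx | hx
    · by_cases hx1 : x = -1
      · exact Or.inr (Or.inl hx1)
      have hxlt : -1 < x := lt_of_le_of_ne hx.1 (Ne.symm hx1)
      have hx0 : x < 0 := lt_of_le_of_lt hx.2 (by linarith)
      have hpos : 0 < 1 - x ^ 2 := by nlinarith
      have hspos : 0 < s := Real.sqrt_pos.mpr hpos
      have hconj : (Complex.mk (-x) s) = -(starRingEnd ℂ (Complex.mk x s)) := by
        apply Complex.ext <;> simp
      have hw : (Complex.mk (-x) s) ^ n = 1 := by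
        rw [hconj, hev.neg_pow, ← map_pow, h, map_one]
      have := hre_le _ hw (by simpa using hspos)
      simp only [Complex.mk] at this
      exact Or.inr (Or.inr (Or.inr (le_antisymm hx.2 (by linarith))))
    · by_cases hx1 : x = 1
      · exact Or.inl hx1
      have hxlt : x < 1 := lt_of_le_of_ne hx.2 hx1
      have hpos : 0 < 1 - x ^ 2 := by nlinarith [hx.1]
      have hspos : 0 < s := Real.sqrt_pos.mpr hpos
      have := hre_le _ h (by simpa using hspos)
      simp only [Complex.mk] at this
      exact Or.inr (Or.inr (Or.inl (le_antisymm this hx.1)))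
  · rintro (h | h | h | h)
    · have hz : (Complex.mk x s) = 1 := by
        apply Complex.ext <;> simp [hs, h]
      rw [hz, one_pow]
    · have hz : (Complex.mk x s) = -1 := by
        apply Complex.ext <;> simp [hs, h]
      rw [hz, hev.neg_one_pow]
    · have hsb : s = b := by
        rw [hs, h, show (1 : ℝ) - a ^ 2 = b ^ 2 by linarith]
        exact Real.sqrt_sq hb.le
      have hz : (Complex.mk x s) = ζ := by
        apply Complex.ext <;> simp [hζ, hsb, h]
      rw [hz]; exact hroot
    · have hsb : s = b := by
        rw [hs, h, show (1 : ℝ) - (-a) ^ 2 = b ^ 2 by nlinarith]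
        exact Real.sqrt_sq hb.le
      have hz : (Complex.mk x s) = -(starRingEnd ℂ ζ) := by
        apply Complex.ext <;> simp [hζ, hsb, h]
      rw [hz, hev.neg_pow, ← map_pow, hroot, map_one]
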